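/- Let s(x) = sin(ln(−ln x))/16 and suppose a function V : (0,1/16] → ℝ satisfies |V(λ) − s(λ)| ≤ √λ + ε(λ) with ε(λ) → 0 as λ → 0⁺. Then V does not converge as λ → 0⁺; specifically limsup_{λ→0} V(λ) ≥ 1/16 and liminf_{λ→0} V(λ) ≤ −1/16. -/

import Mathlib

open Real Set Filter Topology

lemma aux_tendsto_seq (c : ℝ) :
    Filter.Tendsto (fun n : ℕ => Real.exp (-(Real.exp (c + 2 * Real.pi * n))))
      Filter.atTop (nhdsWithin 0 (Set.Ioi 0)) := by
  apply tendsto_nhdsWithin_of_tendsto_nhds_of_eventually_within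
  · have h1 : Filter.Tendsto (fun n : ℕ => c + 2 * Real.pi * n) Filter.atTop Filter.atTop := by
      apply Filter.tendsto_atTop_add_const_left
      exact Tendsto.const_mul_atTop (by positivity) (tendsto_natCast_atTop_atTop (R := ℝ))
    have h2 := Real.tendsto_exp_atTop.comp h1
    have h3 := (Real.tendsto_exp_atBot).comp (Filter.tendsto_neg_atBot_iff.2 h2)
    exact h3
  · filter_upwards with n using Real.exp_pos _

lemma aux_key (V ε : ℝ → ℝ)
    (hV : ∀ lam ∈ Set.Ioc (0:ℝ) (1/16),
      |V lam - Real.sin (Real.log (-Real.log lam)) / 16| ≤ Real.sqrt lam + ε lam)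
    (hε : Filter.Tendsto ε (nhdsWithin 0 (Set.Ioi 0)) (nhds 0))
    (x : ℕ → ℝ) (hx : Filter.Tendsto x Filter.atTop (nhdsWithin 0 (Set.Ioi 0)))
    (c : ℝ) (hsin : ∀ n, Real.sin (Real.log (-Real.log (x n))) = c) :
    Filter.Tendsto (fun n => V (x n)) Filter.atTop (nhds (c / 16)) := by
  have hmem : ∀ᶠ n in Filter.atTop, x n ∈ Set.Ioc (0:ℝ) (1/16) :=
    hx (Ioc_mem_nhdsGT_of_mem (by constructor <;> norm_num))
  have hx0 : Filter.Tendsto x Filter.atTop (nhds 0) := hx.mono_right nhdsWithin_le_nhds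
  have hsqrt : Filter.Tendsto (fun n => Real.sqrt (x n)) Filter.atTop (nhds 0) := by
    have := (Real.continuous_sqrt.tendsto 0).comp hx0
    simpa [Function.comp_def] using this
  have hεx : Filter.Tendsto (fun n => ε (x n)) Filter.atTop (nhds 0) := hε.comp hx
  have hsum : Filter.Tendsto (fun n => Real.sqrt (x n) + ε (x n)) Filter.atTop (nhds 0) := by
    simpa using hsqrt.add hεx
  have hdiff : Filter.Tendsto (fun n => V (x n) - c / 16) Filter.atTop (nhds 0) := by
    apply squeeze_zero_norm' _ hsum
    filter_upwards [hmem] with n hn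
    have := hV (x n) hn
    rw [hsin n] at this
    simpa [Real.norm_eq_abs] using this
  have := hdiff.add_const (c / 16)
  simpa using this

theorem stmt_19 (V ε : ℝ → ℝ)
    (hV : ∀ lam ∈ Set.Ioc (0:ℝ) (1/16),
      |V lam - Real.sin (Real.log (-Real.log lam)) / 16| ≤ Real.sqrt lam + ε lam)
    (hε : Filter.Tendsto ε (nhdsWithin 0 (Set.Ioi 0)) (nhds 0)) :
    (¬ ∃ L : ℝ, Filter.Tendsto V (nhdsWithin 0 (Set.Ioi 0)) (nhds L)) ∧
    (1/16 : ℝ) ≤ Filter.limsup V (nhdsWithin 0 (Set.Ioi 0)) ∧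
    Filter.liminf V (nhdsWithin 0 (Set.Ioi 0)) ≤ -(1/16) := by
  set F := nhdsWithin (0:ℝ) (Set.Ioi 0) with hF
  -- sequences
  set x : ℕ → ℝ := fun n => Real.exp (-(Real.exp (Real.pi / 2 + 2 * Real.pi * n))) with hxdef
  set y : ℕ → ℝ := fun n => Real.exp (-(Real.exp (-(Real.pi / 2) + 2 * Real.pi * n))) with hydef
  have hxT : Filter.Tendsto x Filter.atTop F := aux_tendsto_seq _
  have hyT : Filter.Tendsto y Filter.atTop F := aux_tendsto_seq _
  have hxsin : ∀ n, Real.sin (Real.log (-Real.log (x n))) = 1 := by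
    intro n
    simp only [hxdef, Real.log_exp, neg_neg, Real.log_exp]
    have : Real.pi / 2 + 2 * Real.pi * n = Real.pi / 2 + (n : ℝ) * (2 * Real.pi) := by ring
    rw [this, Real.sin_add_nat_mul_two_pi, Real.sin_pi_div_two]
  have hysin : ∀ n, Real.sin (Real.log (-Real.log (y n))) = -1 := by
    intro n
    simp only [hydef, Real.log_exp, neg_neg, Real.log_exp]
    have : -(Real.pi / 2) + 2 * Real.pi * n = -(Real.pi / 2) + (n : ℝ) * (2 * Real.pi) := by ring
    rw [this, Real.sin_add_nat_mul_two_pi]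
    simp
  have hVx : Filter.Tendsto (fun n => V (x n)) Filter.atTop (nhds (1 / 16)) := by
    simpa using aux_key V ε hV hε x hxT 1 hxsin
  have hVy : Filter.Tendsto (fun n => V (y n)) Filter.atTop (nhds (-(1 / 16))) := by
    have := aux_key V ε hV hε y hyT (-1) hysin
    simpa [neg_div] using this
  -- boundedness of V near 0
  have hbd : ∀ᶠ lam in F, |V lam| ≤ 3 := by
    have h1 : ∀ᶠ lam in F, lam ∈ Set.Ioc (0:ℝ) (1/16) :=
      Ioc_mem_nhdsGT_of_mem (by constructor <;> norm_num)
    have h2 : ∀ᶠ lam in F, ε lam ≤ 1 := hε.eventually (eventually_le_nhds one_pos)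
    filter_upwards [h1, h2] with lam hlam hεlam
    have hb := hV lam hlam
    have hs : |Real.sin (Real.log (-Real.log lam)) / 16| ≤ 1 / 16 := by
      rw [abs_div]
      have := Real.abs_sin_le_one (Real.log (-Real.log lam))
      rw [abs_of_pos (show (0:ℝ) < 16 by norm_num)]
      linarith
    have hsq : Real.sqrt lam ≤ 1 := Real.sqrt_le_one.2 (by linarith [hlam.2])
    calc |V lam| = |(V lam - Real.sin (Real.log (-Real.log lam)) / 16)
          + Real.sin (Real.log (-Real.log lam)) / 16| := by ring_nf
      _ ≤ |V lam - Real.sin (Real.log (-Real.log lam)) / 16|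
          + |Real.sin (Real.log (-Real.log lam)) / 16| := abs_add_le _ _
      _ ≤ (Real.sqrt lam + ε lam) + 1/16 := add_le_add hb hs
      _ ≤ 3 := by linarith
  have hbdLe : Filter.IsBoundedUnder (· ≤ ·) F V :=
    ⟨3, Filter.eventually_map.2 <| by filter_upwards [hbd] with lam h using (abs_le.1 h).2⟩
  have hbdGe : Filter.IsBoundedUnder (· ≥ ·) F V :=
    ⟨-3, Filter.eventually_map.2 <| by filter_upwards [hbd] with lam h using (abs_le.1 h).1⟩
  have hlimsup : (1/16 : ℝ) ≤ Filter.limsup V F := by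
    apply le_of_forall_lt fun a ha => ?_
    have ha2 : a < (a + 1/16) / 2 := by linarith
    have ha3 : (a + 1/16) / 2 < 1/16 := by linarith
    have hfreq : ∃ᶠ lam in F, (a + 1/16) / 2 ≤ V lam := by
      apply hxT.frequently
      apply Filter.Eventually.frequently
      exact hVx.eventually (eventually_ge_nhds ha3)
    exact lt_of_lt_of_le ha2 (Filter.le_limsup_of_frequently_le hfreq hbdLe)
  have hliminf : Filter.liminf V F ≤ -(1/16 : ℝ) := by
    apply le_of_forall_gt fun a ha => ?_
    have ha2 : (a + -(1/16)) / 2 < a := by linarith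
    have ha3 : -(1/16) < (a + -(1/16)) / 2 := by linarith
    have hfreq : ∃ᶠ lam in F, V lam ≤ (a + -(1/16)) / 2 := by
      apply hyT.frequently
      apply Filter.Eventually.frequently
      exact hVy.eventually (eventually_le_nhds ha3)
    exact lt_of_le_of_lt (Filter.liminf_le_of_frequently_le hfreq hbdGe) ha2
  refine ⟨?_, hlimsup, hliminf⟩
  rintro ⟨L, hL⟩
  have h1 : Filter.limsup V F = L := hL.limsup_eq
  have h2 : Filter.liminf V F = L := hL.liminf_eq
  rw [h1] at hlimsup
  rw [h2] at hliminf
  linarith
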